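/- Let m, n, k be positive integers with k ≤ n and let X ∈ M_m ⊗ M_n be Hermitian. Then sup{ |⟨v, X v⟩| : v a unit vector in ℂ^m ⊗ ℂ^n with SR(v) ≤ k } = sup{ |⟨v, X w⟩| : v, w unit vectors in ℂ^m ⊗ ℂ^n with SR(v) ≤ k, SR(w) ≤ k, and there exists P ∈ M_m with (P ⊗ I_n) v = w }. (This is the key equality established in the proof of Theorem 5.2 for Hermitian operators.) -/

import Mathlib

open scoped ComplexOrder Kronecker
open Matrix

noncomputable section

/-- The standard inner product `⟨v, w⟩ = ∑ conj(vᵢ) wᵢ` on `I → ℂ`. -/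
def inprod {I : Type*} [Fintype I] (v w : I → ℂ) : ℂ :=
  ∑ i, (starRingEnd ℂ) (v i) * w i

/-- `v` is a unit vector. -/
def UnitVec {I : Type*} [Fintype I] (v : I → ℂ) : Prop :=
  inprod v v = 1

/-- The Schmidt rank of a vector in `ℂ^I ⊗ ℂ^J`, i.e. the rank of the associated
`I × J` coefficient matrix. -/
noncomputable def SchmidtRank {I J : Type*} [Fintype I] [Fintype J] (v : I × J → ℂ) : ℕ :=
  (Matrix.of fun i j => v (i, j)).rank

/-- The operator norm (largest singular value) of a matrix, as
`sup { |⟨v, A w⟩| : v, w unit vectors }`. -/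
noncomputable def opNorm {I J : Type*} [Fintype I] [Fintype J] (A : Matrix I J ℂ) : ℝ :=
  sSup { t : ℝ | ∃ v w, UnitVec v ∧ UnitVec w ∧ t = ‖inprod v (A.mulVec w)‖ }

/-- The `S(k)`-norm of `X ∈ M_I ⊗ M_J`. -/
noncomputable def SNorm {I J : Type*} [Fintype I] [Fintype J] (k : ℕ)
    (X : Matrix (I × J) (I × J) ℂ) : ℝ :=
  sSup { t : ℝ | ∃ v w : I × J → ℂ, UnitVec v ∧ UnitVec w ∧
    SchmidtRank v ≤ k ∧ SchmidtRank w ≤ k ∧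
    t = ‖inprod v (X.mulVec w)‖ }

/-- `X` is a `k`-block positive (Hermitian) operator: `⟨v, X v⟩ ≥ 0` for every
vector of Schmidt rank at most `k`. -/
def kBlockPos {I J : Type*} [Fintype I] [Fintype J] (k : ℕ)
    (X : Matrix (I × J) (I × J) ℂ) : Prop :=
  X.IsHermitian ∧ ∀ v : I × J → ℂ, SchmidtRank v ≤ k → 0 ≤ inprod v (X.mulVec v)

/-- `ρ` has Schmidt number at most `k` (in particular it is positive semidefinite):
it is a finite nonnegative combination of rank-one projections onto vectors of
Schmidt rank at most `k`. -/
def SchmidtNumberLE {I J : Type*} [Fintype I] [Fintype J] (k : ℕ)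
    (ρ : Matrix (I × J) (I × J) ℂ) : Prop :=
  ∃ (N : ℕ) (c : Fin N → ℝ) (v : Fin N → (I × J → ℂ)),
    (∀ i, 0 ≤ c i) ∧ (∀ i, SchmidtRank (v i) ≤ k) ∧
    ρ = ∑ i, (c i : ℂ) • Matrix.vecMulVec (v i) (star (v i))

/-- `id_I ⊗ Φ` : the map applying `Φ` to the second tensor factor. -/
noncomputable def tensorId {I : Type*} [Fintype I] {a b : ℕ}
    (Φ : Matrix (Fin a) (Fin a) ℂ →ₗ[ℂ] Matrix (Fin b) (Fin b) ℂ)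
    (X : Matrix (I × Fin a) (I × Fin a) ℂ) : Matrix (I × Fin b) (I × Fin b) ℂ :=
  Matrix.of fun p q => Φ (Matrix.of fun s t => X (p.1, s) (q.1, t)) p.2 q.2

/-- The trace norm `‖X‖_tr = Tr √(X^* X)`. -/
noncomputable def trNorm {I : Type*} [Fintype I] [DecidableEq I] (X : Matrix I I ℂ) : ℝ :=
  ((Matrix.posSemidef_conjTranspose_mul_self X).1.eigenvectorUnitary.1 *
    Matrix.diagonal ((fun x : ℝ => (x : ℂ)) ∘ (√·) ∘ (Matrix.posSemidef_conjTranspose_mul_self X).1.eigenvalues) *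
    (star (Matrix.posSemidef_conjTranspose_mul_self X).1.eigenvectorUnitary : Matrix I I ℂ)).trace.re

end

section helpers

variable {I : Type*} [Fintype I]

lemma inprod_add_left (u v w : I → ℂ) : inprod (u + v) w = inprod u w + inprod v w := by
  simp only [inprod, Pi.add_apply, map_add]
  rw [← Finset.sum_add_distrib]
  exact Finset.sum_congr rfl fun i _ => by ring

lemma inprod_add_right (u v w : I → ℂ) : inprod u (v + w) = inprod u v + inprod u w := by
  simp only [inprod, Pi.add_apply]
  rw [← Finset.sum_add_distrib]
  exact Finset.sum_congr rfl fun i _ => by ring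

lemma inprod_sub_left (u v w : I → ℂ) : inprod (u - v) w = inprod u w - inprod v w := by
  simp only [inprod, Pi.sub_apply, map_sub]
  rw [← Finset.sum_sub_distrib]
  exact Finset.sum_congr rfl fun i _ => by ring

lemma inprod_sub_right (u v w : I → ℂ) : inprod u (v - w) = inprod u v - inprod u w := by
  simp only [inprod, Pi.sub_apply]
  rw [← Finset.sum_sub_distrib]
  exact Finset.sum_congr rfl fun i _ => by ring

lemma inprod_smul_left (c : ℂ) (v w : I → ℂ) :
    inprod (c • v) w = (starRingEnd ℂ) c * inprod v w := by
  simp only [inprod, Pi.smul_apply, smul_eq_mul, _root_.map_mul, Finset.mul_sum]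
  exact Finset.sum_congr rfl fun i _ => by ring

lemma inprod_smul_right (c : ℂ) (v w : I → ℂ) :
    inprod v (c • w) = c * inprod v w := by
  simp only [inprod, Pi.smul_apply, smul_eq_mul, Finset.mul_sum]
  exact Finset.sum_congr rfl fun i _ => by ring

lemma inprod_self_eq (v : I → ℂ) :
    inprod v v = ((∑ i, Complex.normSq (v i) : ℝ) : ℂ) := by
  simp only [inprod, Complex.ofReal_sum]
  exact Finset.sum_congr rfl fun i _ => (Complex.normSq_eq_conj_mul_self (z := v i)).symm

lemma inprod_conj [DecidableEq I] {X : Matrix I I ℂ} (hX : X.IsHermitian) (v w : I → ℂ) :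
    (starRingEnd ℂ) (inprod v (X.mulVec w)) = inprod w (X.mulVec v) := by
  simp only [inprod, Matrix.mulVec, dotProduct, map_sum, _root_.map_mul, Complex.conj_conj,
    Finset.mul_sum]
  rw [Finset.sum_comm]
  refine Finset.sum_congr rfl fun j _ => Finset.sum_congr rfl fun i _ => ?_
  have h : (starRingEnd ℂ) (X i j) = X j i := hX.apply j i
  rw [h]; ring

lemma unit_abs_le {v : I → ℂ} (hv : UnitVec v) (p : I) : ‖v p‖ ≤ 1 := by
  have h1 : (∑ i, Complex.normSq (v i)) = 1 := by
    have := hv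
    rw [UnitVec, inprod_self_eq] at this
    exact_mod_cast this
  have h2 : Complex.normSq (v p) ≤ 1 := by
    rw [← h1]
    exact Finset.single_le_sum (fun i _ => Complex.normSq_nonneg (v i)) (Finset.mem_univ p)
  have h3 : (‖v p‖)^2 ≤ 1 := by rwa [← Complex.sq_norm] at h2
  nlinarith [norm_nonneg (v p)]

end helpers

section sr

variable {m n : ℕ}

lemma coeff_kron_mulVec (A : Matrix (Fin m) (Fin m) ℂ) (v : Fin m × Fin n → ℂ) :
    (Matrix.of fun i j => ((A ⊗ₖ (1 : Matrix (Fin n) (Fin n) ℂ)).mulVec v) (i, j))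
      = A * (Matrix.of fun i j => v (i, j)) := by
  ext i j
  simp only [Matrix.of_apply, Matrix.mulVec, dotProduct, Matrix.mul_apply,
    Fintype.sum_prod_type, Matrix.kroneckerMap_apply, Matrix.one_apply]
  refine Finset.sum_congr rfl fun s _ => ?_
  simp [mul_ite, ite_mul, Finset.sum_ite_eq]

lemma sr_kron_mulVec (A : Matrix (Fin m) (Fin m) ℂ) (v : Fin m × Fin n → ℂ) :
    SchmidtRank ((A ⊗ₖ (1 : Matrix (Fin n) (Fin n) ℂ)).mulVec v) ≤ SchmidtRank v := by
  unfold SchmidtRank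
  rw [coeff_kron_mulVec]
  exact Matrix.rank_mul_le_right _ _

lemma sr_smul (c : ℂ) (v : Fin m × Fin n → ℂ) :
    SchmidtRank (c • v) ≤ SchmidtRank v := by
  unfold SchmidtRank
  have : (Matrix.of fun i j => (c • v) (i, j)) = (c • 1 : Matrix (Fin m) (Fin m) ℂ) *
      (Matrix.of fun i j => v (i, j)) := by
    ext i j
    simp [Matrix.mul_apply, Matrix.one_apply, mul_ite, ite_mul, Finset.sum_ite_eq]
  rw [this]
  exact Matrix.rank_mul_le_right _ _

lemma sr_single (p : Fin m × Fin n) : SchmidtRank (Pi.single p (1 : ℂ)) ≤ 1 := by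
  unfold SchmidtRank
  have : (Matrix.of fun i j => (Pi.single p 1 : Fin m × Fin n → ℂ) (i, j)) =
      (Matrix.of fun i (_ : Fin 1) => Pi.single p.1 (1:ℂ) i) *
      (Matrix.of fun (_ : Fin 1) j => Pi.single p.2 (1:ℂ) j) := by
    ext i j
    simp only [Matrix.of_apply, Matrix.mul_apply, Finset.sum_const, Finset.card_univ,
      Fintype.card_fin, one_smul]
    rw [Pi.single_apply, Pi.single_apply, Pi.single_apply]
    obtain ⟨p1, p2⟩ := p
    by_cases h1 : i = p1 <;> by_cases h2 : j = p2 <;>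
      simp [Prod.ext_iff, h1, h2]
  rw [this]
  calc ((Matrix.of fun i (_ : Fin 1) => Pi.single p.1 (1:ℂ) i) *
      (Matrix.of fun (_ : Fin 1) j => Pi.single p.2 (1:ℂ) j)).rank
      ≤ (Matrix.of fun (_ : Fin 1) j => Pi.single p.2 (1:ℂ) j).rank :=
        Matrix.rank_mul_le_right _ _
    _ ≤ Fintype.card (Fin 1) := Matrix.rank_le_card_height _
    _ = 1 := by simp

end sr

/-- The key equality in the proof of Theorem 5.2, for Hermitian operators. -/
theorem hermitian_sup_diag_eq_sup_related (m n k : ℕ) (hm : 0 < m) (hn : 0 < n)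
    (hk : 0 < k) (hkn : k ≤ n)
    (X : Matrix (Fin m × Fin n) (Fin m × Fin n) ℂ) (hX : X.IsHermitian) :
    sSup { t : ℝ | ∃ v : Fin m × Fin n → ℂ, UnitVec v ∧ SchmidtRank v ≤ k ∧
        t = ‖inprod v (X.mulVec v)‖ } =
      sSup { t : ℝ | ∃ v w : Fin m × Fin n → ℂ, UnitVec v ∧ UnitVec w ∧
        SchmidtRank v ≤ k ∧ SchmidtRank w ≤ k ∧
        (∃ P : Matrix (Fin m) (Fin m) ℂ,
          (P ⊗ₖ (1 : Matrix (Fin n) (Fin n) ℂ)).mulVec v = w) ∧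
        t = ‖inprod v (X.mulVec w)‖ } := by
  set A := { t : ℝ | ∃ v : Fin m × Fin n → ℂ, UnitVec v ∧ SchmidtRank v ≤ k ∧
      t = ‖inprod v (X.mulVec v)‖ } with hA
  set B := { t : ℝ | ∃ v w : Fin m × Fin n → ℂ, UnitVec v ∧ UnitVec w ∧
      SchmidtRank v ≤ k ∧ SchmidtRank w ≤ k ∧
      (∃ P : Matrix (Fin m) (Fin m) ℂ,
        (P ⊗ₖ (1 : Matrix (Fin n) (Fin n) ℂ)).mulVec v = w) ∧
      t = ‖inprod v (X.mulVec w)‖ } with hB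
  -- crude bound
  set B0 : ℝ := ∑ p, ∑ q, ‖X p q‖ with hB0
  have hbound : ∀ v w : Fin m × Fin n → ℂ, UnitVec v → UnitVec w →
      ‖inprod v (X.mulVec w)‖ ≤ B0 := by
    intro v w hv hw
    calc ‖inprod v (X.mulVec w)‖
        ≤ ∑ p, ‖(starRingEnd ℂ) (v p) * (X.mulVec w) p‖ :=
          norm_sum_le _ _
      _ ≤ ∑ p, ∑ q, ‖X p q‖ := by
          refine Finset.sum_le_sum fun p _ => ?_
          rw [norm_mul, Complex.norm_conj]
          calc ‖v p‖ * ‖(X.mulVec w) p‖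
              ≤ 1 * ‖(X.mulVec w) p‖ := by
                have := unit_abs_le hv p
                have h0 := norm_nonneg ((X.mulVec w) p)
                nlinarith
            _ = ‖(X.mulVec w) p‖ := one_mul _
            _ ≤ ∑ q, ‖X p q * w q‖ := norm_sum_le _ _
            _ ≤ ∑ q, ‖X p q‖ := by
                refine Finset.sum_le_sum fun q _ => ?_
                rw [norm_mul]
                have := unit_abs_le hw q
                have h0 := norm_nonneg (X p q)
                nlinarith
  have hAbdd : BddAbove A := by
    refine ⟨B0, fun t ht => ?_⟩
    obtain ⟨v, hv, _, rfl⟩ := ht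
    exact hbound v v hv hv
  have hBbdd : BddAbove B := by
    refine ⟨B0, fun t ht => ?_⟩
    obtain ⟨v, w, hv, hw, _, _, _, rfl⟩ := ht
    exact hbound v w hv hw
  -- nonemptiness of A
  have hAne : A.Nonempty := by
    set p0 : Fin m × Fin n := (⟨0, hm⟩, ⟨0, hn⟩) with hp0
    refine ⟨_, ⟨Pi.single p0 1, ?_, le_trans (sr_single p0) hk, rfl⟩⟩
    rw [UnitVec, inprod_self_eq]
    have : (∑ i, Complex.normSq ((Pi.single p0 1 : Fin m × Fin n → ℂ) i)) = 1 := by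
      rw [Fintype.sum_eq_single p0]
      · simp
      · intro q hq; simp [Pi.single_apply, hq]
    rw [this]; norm_num
  set S := sSup A with hS
  have hS0 : 0 ≤ S := by
    obtain ⟨t, ht⟩ := hAne
    have ht' := le_csSup hAbdd ht
    obtain ⟨v, _, _, rfl⟩ := ht
    exact le_trans (norm_nonneg _) ht'
  -- key bound
  have hkey : ∀ u : Fin m × Fin n → ℂ, SchmidtRank u ≤ k →
      ‖inprod u (X.mulVec u)‖ ≤ (∑ i, Complex.normSq (u i)) * S := by
    intro u hu
    set t := ∑ i, Complex.normSq (u i) with htd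
    have ht0 : 0 ≤ t := Finset.sum_nonneg fun i _ => Complex.normSq_nonneg _
    rcases eq_or_lt_of_le ht0 with ht | ht
    · -- u = 0
      have hz : ∀ i, u i = 0 := by
        intro i
        have := (Finset.sum_eq_zero_iff_of_nonneg
          (fun i _ => Complex.normSq_nonneg (u i))).mp ht.symm i (Finset.mem_univ i)
        exact Complex.normSq_eq_zero.mp this
      have : inprod u (X.mulVec u) = 0 := by
        unfold inprod
        refine Finset.sum_eq_zero fun i _ => ?_
        rw [hz i]; simp
      rw [this, ← ht]
      simp
    · set s := Real.sqrt t with hsd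
      have hs0 : 0 < s := Real.sqrt_pos.mpr ht
      have hss : s * s = t := Real.mul_self_sqrt ht0
      set u₀ : Fin m × Fin n → ℂ := ((s⁻¹ : ℝ) : ℂ) • u with hu₀
      have hinv : (s⁻¹ : ℝ) * (s⁻¹ : ℝ) = t⁻¹ := by
        rw [← mul_inv, hss]
      have hu₀unit : UnitVec u₀ := by
        rw [UnitVec, hu₀, inprod_smul_left, inprod_smul_right, inprod_self_eq, ← htd,
          Complex.conj_ofReal]
        have hcast : ((s⁻¹ : ℝ) : ℂ) * (((s⁻¹ : ℝ) : ℂ) * ((t : ℝ) : ℂ))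
            = (((s⁻¹ * s⁻¹ * t : ℝ)) : ℂ) := by push_cast; ring
        rw [hcast, hinv, inv_mul_cancel₀ (ne_of_gt ht)]
        norm_num
      have hu₀sr : SchmidtRank u₀ ≤ k := le_trans (sr_smul _ u) hu
      have hmem : ‖inprod u₀ (X.mulVec u₀)‖ ∈ A := ⟨u₀, hu₀unit, hu₀sr, rfl⟩
      have hle : ‖inprod u₀ (X.mulVec u₀)‖ ≤ S := le_csSup hAbdd hmem
      have hq : inprod u₀ (X.mulVec u₀) = ((t⁻¹ : ℝ) : ℂ) * inprod u (X.mulVec u) := by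
        rw [hu₀, Matrix.mulVec_smul, inprod_smul_left, inprod_smul_right,
          Complex.conj_ofReal, ← mul_assoc, ← Complex.ofReal_mul, hinv]
      have habs : ‖inprod u₀ (X.mulVec u₀)‖
          = t⁻¹ * ‖inprod u (X.mulVec u)‖ := by
        rw [hq, norm_mul, Complex.norm_real, Real.norm_of_nonneg (inv_nonneg.mpr ht0)]
      have : t⁻¹ * ‖inprod u (X.mulVec u)‖ ≤ S := habs ▸ hle
      calc ‖inprod u (X.mulVec u)‖
          = t * (t⁻¹ * ‖inprod u (X.mulVec u)‖) := by
            field_simp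
        _ ≤ t * S := by nlinarith
  -- main inequality chain
  apply le_antisymm
  · refine csSup_le_csSup hBbdd hAne fun t ht => ?_
    obtain ⟨v, hv, hsr, rfl⟩ := ht
    exact ⟨v, v, hv, hv, hsr, hsr,
      ⟨1, by rw [Matrix.one_kronecker_one, Matrix.one_mulVec]⟩, rfl⟩
  · refine Real.sSup_le (fun t ht => ?_) hS0
    obtain ⟨v, w, hv, hw, hsrv, hsrw, ⟨P, hP⟩, rfl⟩ := ht
    set α := inprod v (X.mulVec w) with hαd
    by_cases hα : α = 0
    · rw [hα]; simpa using hS0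
    have hca : ‖α‖ ≠ 0 := by simpa using hα
    set c : ℂ := α / ((‖α‖ : ℝ) : ℂ) with hcd
    have hc1 : ‖c‖ = 1 := by
      rw [hcd, norm_div, Complex.norm_real, Real.norm_of_nonneg (norm_nonneg α),
        div_self hca]
    set v' : Fin m × Fin n → ℂ := c • v with hv'd
    have hv'unit : UnitVec v' := by
      rw [UnitVec, hv'd, inprod_smul_left, inprod_smul_right, hv, mul_one, mul_comm,
        Complex.mul_conj, Complex.normSq_eq_norm_sq, hc1]
      norm_num
    have hα' : inprod v' (X.mulVec w) = ((‖α‖ : ℝ) : ℂ) := by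
      rw [hv'd, inprod_smul_left, ← hαd, hcd, map_div₀, Complex.conj_ofReal,
        div_mul_eq_mul_div, mul_comm, Complex.mul_conj, Complex.normSq_eq_norm_sq]
      rw [show ((‖α‖ ^ 2 : ℝ) : ℂ) = ((‖α‖ : ℝ) : ℂ) *
        ((‖α‖ : ℝ) : ℂ) by push_cast; ring]
      rw [mul_div_assoc, div_self (by exact_mod_cast hca), mul_one]
    have hβ : inprod w (X.mulVec v') = ((‖α‖ : ℝ) : ℂ) := by
      rw [← inprod_conj hX v' w, hα', Complex.conj_ofReal]
    -- Schmidt rank of v' ± w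
    have hplus : v' + w = (((c • (1 : Matrix (Fin m) (Fin m) ℂ) + P) ⊗ₖ
        (1 : Matrix (Fin n) (Fin n) ℂ))).mulVec v := by
      rw [Matrix.add_kronecker, Matrix.add_mulVec, hP, Matrix.smul_kronecker,
        Matrix.one_kronecker_one, Matrix.smul_mulVec, Matrix.one_mulVec]
    have hminus : v' - w = (((c • (1 : Matrix (Fin m) (Fin m) ℂ) - P) ⊗ₖ
        (1 : Matrix (Fin n) (Fin n) ℂ))).mulVec v := by
      have hsubk : ((c • (1 : Matrix (Fin m) (Fin m) ℂ) - P) ⊗ₖ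
          (1 : Matrix (Fin n) (Fin n) ℂ)) =
          ((c • (1 : Matrix (Fin m) (Fin m) ℂ)) ⊗ₖ (1 : Matrix (Fin n) (Fin n) ℂ)) -
          (P ⊗ₖ (1 : Matrix (Fin n) (Fin n) ℂ)) := by
        ext i j
        simp [Matrix.kroneckerMap_apply, Matrix.sub_apply, sub_mul]
      rw [hsubk, Matrix.sub_mulVec, hP, Matrix.smul_kronecker,
        Matrix.one_kronecker_one, Matrix.smul_mulVec, Matrix.one_mulVec]
    have hsrp : SchmidtRank (v' + w) ≤ k := by
      rw [hplus]; exact le_trans (sr_kron_mulVec _ v) hsrv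
    have hsrm : SchmidtRank (v' - w) ≤ k := by
      rw [hminus]; exact le_trans (sr_kron_mulVec _ v) hsrv
    -- quadratic forms
    set qp := inprod (v' + w) (X.mulVec (v' + w)) with hqp
    set qm := inprod (v' - w) (X.mulVec (v' - w)) with hqm
    have hqd : qp - qm = ((4 * ‖α‖ : ℝ) : ℂ) := by
      rw [hqp, hqm]
      rw [Matrix.mulVec_add, Matrix.mulVec_sub, inprod_add_left, inprod_sub_left,
        inprod_add_right, inprod_add_right, inprod_sub_right, inprod_sub_right, hα', hβ]
      push_cast
      ring
    set tp := ∑ i, Complex.normSq ((v' + w) i) with htp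
    set tm := ∑ i, Complex.normSq ((v' - w) i) with htm
    have hpar : tp + tm = 4 := by
      have h1 : ((tp : ℝ) : ℂ) + ((tm : ℝ) : ℂ) = 4 := by
        rw [← inprod_self_eq, ← inprod_self_eq]
        rw [inprod_add_left, inprod_add_right, inprod_add_right, inprod_sub_left,
          inprod_sub_right, inprod_sub_right, hv'unit, hw]
        ring
      have : ((tp + tm : ℝ) : ℂ) = ((4 : ℝ) : ℂ) := by push_cast at h1 ⊢; linear_combination h1
      exact_mod_cast this
    have hre : qp.re - qm.re = 4 * ‖α‖ := by
      have := congrArg Complex.re hqd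
      simpa [Complex.sub_re] using this
    have h1 : ‖qp‖ ≤ tp * S := hkey _ hsrp
    have h2 : ‖qm‖ ≤ tm * S := hkey _ hsrm
    have h3 : qp.re ≤ ‖qp‖ := Complex.re_le_norm qp
    have h4 : -‖qm‖ ≤ qm.re := neg_le_of_abs_le (Complex.abs_re_le_norm qm)
    have h5 : tp * S + tm * S = 4 * S := by rw [← add_mul, hpar]
    linarith
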